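/- For any matrix A ∈ F₂^{r×ℓ}, one has 2^{−ℓ−r}·Σ_{x∈F₂^ℓ} Σ_{y∈F₂^r} (−1)^{yᵀAx} = 2^{−rank_{F₂}(A)}, where the F₂ scalar yᵀAx is interpreted as 0 or 1 in the exponent. Consequently, for every ordered bipartite graph G ∈ B_{ℓ,r} with bipartite adjacency matrix A(G), the vector χ_G is an eigenvector of the operator bPiv with eigenvalue 2^{−rank_{F₂}(A(G))}. -/

import Mathlib

open Finset

/-- `χ_G(H) = (−1)^{|E(G) ∩ E(H)|}` for ordered bipartite graphs on parts of
sizes `ℓ` and `r`, identified with their bipartite adjacency matrices in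
`F₂^{r×ℓ}`. -/
noncomputable def chiB (l r : ℕ) (G : Matrix (Fin r) (Fin l) (ZMod 2)) :
    Matrix (Fin r) (Fin l) (ZMod 2) → ℝ :=
  fun H => (-1 : ℝ) ^ (Nat.card {p : Fin r × Fin l // G p.1 p.2 = 1 ∧ H p.1 p.2 = 1})

/-- The `bPiv` walk operator:
`(bPiv f)(H) = 2^{−ℓ−r}·Σ_{S ⊆ L, T ⊆ R} f(H △ K_{S,T})`, where `K_{S,T}` is
the complete bipartite graph between `S` and `T` (as a matrix, and symmetric
difference is addition over `F₂`). -/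
noncomputable def bPiv (l r : ℕ) (f : Matrix (Fin r) (Fin l) (ZMod 2) → ℝ) :
    Matrix (Fin r) (Fin l) (ZMod 2) → ℝ :=
  fun H => ((2 : ℝ) ^ (l + r))⁻¹ *
    ∑ S : Finset (Fin l), ∑ T : Finset (Fin r),
      f (H + Matrix.of fun i j => if i ∈ T ∧ j ∈ S then 1 else 0)

noncomputable def eps : ZMod 2 → ℝ := fun a => (-1 : ℝ) ^ a.val

lemma zmod2_cases (a : ZMod 2) : a = 0 ∨ a = 1 := by
  fin_cases a
  · left; rfl
  · right; rfl

lemma eps_zero : eps 0 = 1 := by simp [eps]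
lemma eps_one : eps 1 = -1 := by
  simp [eps, ZMod.val_one]

lemma eps_add (a b : ZMod 2) : eps (a + b) = eps a * eps b := by
  have h11 : (1 + 1 : ZMod 2) = 0 := by decide
  rcases zmod2_cases a with ha | ha <;> rcases zmod2_cases b with hb | hb <;>
    simp [ha, hb, h11, eps_zero, eps_one]

lemma eps_sum {ι : Type*} (s : Finset ι) (f : ι → ZMod 2) :
    eps (∑ i ∈ s, f i) = ∏ i ∈ s, eps (f i) := by
  induction s using Finset.cons_induction with
  | empty => simp [eps_zero]
  | cons a s ha ih => rw [Finset.sum_cons, Finset.prod_cons, eps_add, ih]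

lemma zmod2_sum (f : ZMod 2 → ℝ) : ∑ a : ZMod 2, f a = f 0 + f 1 := by
  rw [show (Finset.univ : Finset (ZMod 2)) = {0, 1} from by decide]
  rw [Finset.sum_insert (by decide), Finset.sum_singleton]

lemma sum_sign (r : ℕ) (v : Fin r → ZMod 2) :
    ∑ y : Fin r → ZMod 2, eps (dotProduct y v)
      = if v = 0 then (2 : ℝ) ^ r else 0 := by
  have h1 : ∀ y : Fin r → ZMod 2, eps (dotProduct y v)
      = ∏ i, eps (y i * v i) := fun y => eps_sum _ _
  simp only [h1]
  have key := Finset.sum_prod_piFinset (univ : Finset (ZMod 2))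
    (fun (i : Fin r) (a : ZMod 2) => eps (a * v i))
  rw [← Fintype.piFinset_univ, key]
  have h2 : ∀ i, ∑ a : ZMod 2, eps (a * v i) = 1 + eps (v i) := by
    intro i; rw [zmod2_sum]; simp [eps_zero]
  simp only [h2]
  split_ifs with hv
  · subst hv; simp [eps_zero]; norm_num
  · obtain ⟨i, hi⟩ : ∃ i, v i ≠ 0 := by
      by_contra h; push_neg at h; exact hv (funext h)
    have : v i = 1 := (zmod2_cases (v i)).resolve_left hi
    exact Finset.prod_eq_zero (Finset.mem_univ i) (by rw [this, eps_one]; ring)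

lemma ker_card {l r : ℕ} (A : Matrix (Fin r) (Fin l) (ZMod 2)) :
    Nat.card {x : Fin l → ZMod 2 // A.mulVec x = 0} = 2 ^ (l - A.rank) := by
  have e : {x : Fin l → ZMod 2 // A.mulVec x = 0} ≃ LinearMap.ker A.mulVecLin := by
    refine Equiv.subtypeEquiv (Equiv.refl _) fun x => ?_
    simp [LinearMap.mem_ker, Matrix.mulVecLin_apply]
  rw [Nat.card_congr e]
  classical
  have : Fintype (LinearMap.ker A.mulVecLin) := Fintype.ofFinite _
  have hcard : Nat.card (LinearMap.ker A.mulVecLin)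
      = 2 ^ Module.finrank (ZMod 2) (LinearMap.ker A.mulVecLin) := by
    rw [Nat.card_eq_fintype_card, Module.card_eq_pow_finrank (K := ZMod 2)]
    simp [ZMod.card]
  rw [hcard]
  congr 1
  have h := LinearMap.finrank_range_add_finrank_ker A.mulVecLin
  rw [Module.finrank_pi] at h
  simp only [Fintype.card_fin] at h
  have : A.rank = Module.finrank (ZMod 2) (LinearMap.range A.mulVecLin) := rfl
  omega

lemma rank_le' {l r : ℕ} (A : Matrix (Fin r) (Fin l) (ZMod 2)) : A.rank ≤ l :=
  A.rank_le_card_width.trans (by simp)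


lemma part1 (l r : ℕ) (A : Matrix (Fin r) (Fin l) (ZMod 2)) :
    ((2 : ℝ) ^ (l + r))⁻¹ *
        ∑ x : Fin l → ZMod 2, ∑ y : Fin r → ZMod 2,
          (-1 : ℝ) ^ (dotProduct y (A.mulVec x)).val
      = ((2 : ℝ) ^ A.rank)⁻¹ := by
  classical
  have hsum : ∑ x : Fin l → ZMod 2, ∑ y : Fin r → ZMod 2,
      (-1 : ℝ) ^ (dotProduct y (A.mulVec x)).val
      = (2 : ℝ) ^ (l - A.rank) * 2 ^ r := by
    have : ∀ x : Fin l → ZMod 2, ∑ y : Fin r → ZMod 2,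
        (-1 : ℝ) ^ (dotProduct y (A.mulVec x)).val
        = if A.mulVec x = 0 then (2 : ℝ) ^ r else 0 := fun x => sum_sign r _
    simp only [this]
    rw [Finset.sum_ite, Finset.sum_const, Finset.sum_const_zero, add_zero,
      nsmul_eq_mul]
    congr 1
    have := ker_card A
    rw [Nat.card_eq_fintype_card, Fintype.card_subtype] at this
    rw [this]
    push_cast
    ring
  rw [hsum]
  have h2 : (2 : ℝ) ^ (l + r) = 2 ^ A.rank * (2 ^ (l - A.rank) * 2 ^ r) := by
    rw [← pow_add, ← pow_add]
    congr 1
    have := rank_le' A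
    omega
  rw [h2]
  have hne : ∀ n : ℕ, (2 : ℝ) ^ n ≠ 0 := fun n => by positivity
  field_simp


lemma chiB_eq (l r : ℕ) (G X : Matrix (Fin r) (Fin l) (ZMod 2)) :
    chiB l r G X = ∏ p : Fin r × Fin l, eps (G p.1 p.2 * X p.1 p.2) := by
  have hval : ∀ a b : ZMod 2, (a * b).val = if a = 1 ∧ b = 1 then 1 else 0 := by decide
  unfold chiB eps
  rw [Finset.prod_pow_eq_pow_sum]
  congr 1
  rw [Nat.card_eq_fintype_card, Fintype.card_subtype, Finset.card_filter]
  exact Finset.sum_congr rfl fun p _ => (hval _ _).symm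

lemma chiB_add (l r : ℕ) (G H K : Matrix (Fin r) (Fin l) (ZMod 2)) :
    chiB l r G (H + K) = chiB l r G H * chiB l r G K := by
  simp only [chiB_eq, ← Finset.prod_mul_distrib]
  refine Finset.prod_congr rfl fun p _ => ?_
  rw [Matrix.add_apply, mul_add, eps_add]

/-- indicator -/
def ind {n : ℕ} (S : Finset (Fin n)) : Fin n → ZMod 2 := fun j => if j ∈ S then 1 else 0

def indEquiv (n : ℕ) : Finset (Fin n) ≃ (Fin n → ZMod 2) where
  toFun := ind
  invFun x := Finset.univ.filter (fun j => x j = 1)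
  left_inv S := by
    ext j
    simp [ind]
  right_inv x := by
    funext j
    simp only [ind, Finset.mem_filter, Finset.mem_univ, true_and]
    rcases zmod2_cases (x j) with h | h <;> simp [h]

lemma chiB_K (l r : ℕ) (G : Matrix (Fin r) (Fin l) (ZMod 2))
    (S : Finset (Fin l)) (T : Finset (Fin r)) :
    chiB l r G (Matrix.of fun i j => if i ∈ T ∧ j ∈ S then 1 else 0)
      = eps (dotProduct (ind T) (G.mulVec (ind S))) := by
  rw [chiB_eq]
  unfold dotProduct Matrix.mulVec
  simp only [dotProduct, Finset.mul_sum, eps_sum]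
  rw [Fintype.prod_prod_type]
  refine Finset.prod_congr rfl fun i _ => Finset.prod_congr rfl fun j _ => ?_
  congr 1
  simp only [Matrix.of_apply, ind]
  by_cases hi : i ∈ T <;> by_cases hj : j ∈ S <;> simp [hi, hj]

theorem bPiv_eigenvalue_aux (l r : ℕ) (G : Matrix (Fin r) (Fin l) (ZMod 2))
    (H : Matrix (Fin r) (Fin l) (ZMod 2)) :
    ((2 : ℝ) ^ (l + r))⁻¹ *
      (∑ S : Finset (Fin l), ∑ T : Finset (Fin r),
        chiB l r G (H + Matrix.of fun i j => if i ∈ T ∧ j ∈ S then 1 else 0))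
      = ((2 : ℝ) ^ G.rank)⁻¹ * chiB l r G H := by
  have step1 : ∀ (S : Finset (Fin l)) (T : Finset (Fin r)),
      chiB l r G (H + Matrix.of fun i j => if i ∈ T ∧ j ∈ S then 1 else 0)
        = chiB l r G H * eps (dotProduct (ind T) (G.mulVec (ind S))) := by
    intro S T; rw [chiB_add, chiB_K]
  simp only [step1, ← Finset.mul_sum]
  have reindex : ∑ S : Finset (Fin l), ∑ T : Finset (Fin r),
      eps (dotProduct (ind T) (G.mulVec (ind S)))
      = ∑ x : Fin l → ZMod 2, ∑ y : Fin r → ZMod 2,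
          (-1 : ℝ) ^ (dotProduct y (G.mulVec x)).val := by
    rw [← Equiv.sum_comp (indEquiv l)
      (fun x => ∑ y : Fin r → ZMod 2, (-1 : ℝ) ^ (dotProduct y (G.mulVec x)).val)]
    refine Finset.sum_congr rfl fun S _ => ?_
    rw [← Equiv.sum_comp (indEquiv r)
      (fun y => (-1 : ℝ) ^ (dotProduct y (G.mulVec (indEquiv l S))).val)]
    rfl
  rw [reindex]
  have := part1 l r G
  have hne : (2 : ℝ) ^ (l + r) ≠ 0 := by positivity
  have hsum : ∑ x : Fin l → ZMod 2, ∑ y : Fin r → ZMod 2,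
      (-1 : ℝ) ^ (dotProduct y (G.mulVec x)).val
      = (2 : ℝ) ^ (l + r) * ((2 : ℝ) ^ G.rank)⁻¹ := by
    field_simp at this ⊢
    linarith [this]
  rw [hsum]
  field_simp


/-- For any `A ∈ F₂^{r×ℓ}`,
`2^{−ℓ−r}·Σ_{x ∈ F₂^ℓ} Σ_{y ∈ F₂^r} (−1)^{yᵀAx} = 2^{−rank_{F₂}(A)}`;
consequently, for every ordered bipartite graph `G ∈ B_{ℓ,r}` with bipartite
adjacency matrix `A(G)`, the vector `χ_G` is an eigenvector of `bPiv` with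
eigenvalue `2^{−rank_{F₂}(A(G))}`. -/
theorem bPiv_eigenvalue (l r : ℕ) :
    (∀ A : Matrix (Fin r) (Fin l) (ZMod 2),
      ((2 : ℝ) ^ (l + r))⁻¹ *
          ∑ x : Fin l → ZMod 2, ∑ y : Fin r → ZMod 2,
            (-1 : ℝ) ^ (dotProduct y (A.mulVec x)).val
        = ((2 : ℝ) ^ A.rank)⁻¹) ∧
    (∀ G : Matrix (Fin r) (Fin l) (ZMod 2),
      bPiv l r (chiB l r G) = ((2 : ℝ) ^ G.rank)⁻¹ • chiB l r G) := by
  refine ⟨part1 l r, fun G => ?_⟩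
  funext H
  simp only [bPiv, Pi.smul_apply, smul_eq_mul]
  exact bPiv_eigenvalue_aux l r G H
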